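/- Let E be a directed graph. Suppose that for every x ∈ E^{≤∞}, every path in E^∞ that is frequently divertable to [x] is shift equivalent to x. Then no cycle in E has an entry. -/

import Mathlib

/-- A directed graph: countable sets of vertices and edges, with range and source
maps. -/
structure DGraph : Type 1 where
  V : Type
  E : Type
  countableV : Countable V
  countableE : Countable E
  r : E → V
  s : E → V

namespace DGraph

/-- `E` is row-finite: every vertex receives only finitely many edges. -/
def RowFinite (G : DGraph) : Prop := ∀ v : G.V, {e : G.E | G.r e = v}.Finite

/-- A source of `E`: a vertex receiving no edges. -/
def IsSource (G : DGraph) (v : G.V) : Prop := ∀ e : G.E, G.r e ≠ v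

end DGraph

/-- A (finite or infinite) path in the directed graph `G`.  `edge i` is the
`(i+1)`-st edge of the path (or `none` beyond the end of the path); once `none`
always `none`, so a path is either a vertex (`rng`, with no edges), a finite path,
or an infinite path.  Edges are composed so that `s(edge i) = r(edge (i+1))`. -/
structure LPath (G : DGraph) where
  rng : G.V
  edge : ℕ → Option G.E
  edge_closed : ∀ i, edge i = none → edge (i + 1) = none
  rng_compat : ∀ e, edge 0 = some e → G.r e = rng
  compat : ∀ i e f, edge i = some e → edge (i + 1) = some f → G.s e = G.r f

namespace LPath

variable {G : DGraph}

/-- The vertex `x(n)` of the path `x` (a junk value, the range, beyond the length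
of the path). -/
def vert (x : LPath G) : ℕ → G.V
  | 0 => x.rng
  | n + 1 =>
    match x.edge n with
    | some e => G.s e
    | none => x.rng

/-- `x` is an infinite path, i.e. a member of `E^∞`. -/
def Infinite (x : LPath G) : Prop := ∀ i, (x.edge i).isSome

/-- `n ≤ |x|`: the first `n` edges of `x` all exist. -/
def LeLen (x : LPath G) (n : ℕ) : Prop := ∀ i, i < n → (x.edge i).isSome

/-- `|x| = n`: `x` is a finite path of length `n`. -/
def LenEq (x : LPath G) (n : ℕ) : Prop := x.edge n = none ∧ x.LeLen n

theorem vert_eq (x : LPath G) (m : ℕ) (e : G.E) (h : x.edge m = some e) :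
    G.r e = x.vert m := by
  cases m with
  | zero => exact x.rng_compat e h
  | succ n =>
    cases hn : x.edge n with
    | none => exact absurd h (by simp [x.edge_closed n hn])
    | some f =>
      have hc := x.compat n f e hn h
      simp only [vert, hn]
      exact hc.symm

/-- The shifted path `σ^m(x)` (meaningful when `m ≤ |x|`). -/
def shift (x : LPath G) (m : ℕ) : LPath G where
  rng := x.vert m
  edge i := x.edge (m + i)
  edge_closed i h := x.edge_closed (m + i) h
  rng_compat e he := x.vert_eq m e he
  compat i e f he hf := x.compat (m + i) e f he hf

/-- `x` is shift equivalent to `y` with lag `n ∈ ℤ`: there are `p, q ∈ ℕ` with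
`p - q = n`, `p ≤ |x|`, `q ≤ |y|` and `σ^p(x) = σ^q(y)`. -/
def ShiftEquivLag (x y : LPath G) (n : ℤ) : Prop :=
  ∃ p q : ℕ, (p : ℤ) - (q : ℤ) = n ∧ x.LeLen p ∧ y.LeLen q ∧ x.shift p = y.shift q

/-- `x` is shift equivalent to `y`. -/
def ShiftEquiv (x y : LPath G) : Prop := ∃ n : ℤ, ShiftEquivLag x y n

/-- `x` belongs to `E^{≤∞}`: it is infinite, or finite with its source a source
of the graph. -/
def Boundary (x : LPath G) : Prop :=
  x.Infinite ∨ ∃ n : ℕ, x.LenEq n ∧ G.IsSource (x.vert n)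

/-- `x` is frequently divertable to `[y]`: for every `n ≤ |x|` there is a path in
`x(n)E^{≤∞}` that is shift equivalent to `y`. -/
def FreqDiv (x y : LPath G) : Prop :=
  ∀ n : ℕ, x.LeLen n → ∃ z : LPath G, z.Boundary ∧ z.rng = x.vert n ∧ ShiftEquiv z y

/-- The segment `x(m, n)` of `x` is a cycle: it is closed (`x(m) = x(n)`) and the
sources `x(i)`, `m < i ≤ n`, of its edges are pairwise distinct. -/
def HasCycleAt (x : LPath G) (m n : ℕ) : Prop :=
  m < n ∧ x.LeLen n ∧ x.vert m = x.vert n ∧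
    ∀ i j, m < i → i ≤ n → m < j → j ≤ n → x.vert i = x.vert j → i = j

/-- `x` contains a cycle. -/
def ContainsCycle (x : LPath G) : Prop := ∃ m n, x.HasCycleAt m n

end LPath

/-- A cycle in `G`: a finite path `α = α_1 ⋯ α_len` (here 0-indexed, and with junk
values of `edge` beyond `len`) of non-zero length with `r(α) = s(α)` and whose edges
have pairwise distinct sources. -/
structure DCycle (G : DGraph) where
  len : ℕ
  len_pos : 0 < len
  edge : ℕ → G.E
  compat : ∀ i, i + 1 < len → G.s (edge i) = G.r (edge (i + 1))
  closed : G.s (edge (len - 1)) = G.r (edge 0)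
  distinct : ∀ i j, i < len → j < len → G.s (edge i) = G.s (edge j) → i = j

namespace DCycle

variable {G : DGraph}

/-- `f` is an entry to the cycle `c`: `r(f) = r(c_i)` and `f ≠ c_i` for some `i`. -/
def IsEntry (c : DCycle G) (f : G.E) : Prop :=
  ∃ i, i < c.len ∧ G.r f = G.r (c.edge i) ∧ f ≠ c.edge i

/-- The edge `f` lies in the cycle `c`. -/
def EdgeMem (c : DCycle G) (f : G.E) : Prop := ∃ i, i < c.len ∧ c.edge i = f

end DCycle

section Helpers

open Classical

variable {G : DGraph}

theorem lpext {x y : LPath G} (h1 : x.rng = y.rng) (h2 : x.edge = y.edge) :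
    x = y := by
  obtain ⟨r1, e1, _, _, _⟩ := x
  obtain ⟨r2, e2, _, _, _⟩ := y
  dsimp at h1 h2
  subst h1; subst h2
  rfl

theorem vert_succ (x : LPath G) {k : ℕ} {e : G.E} (h : x.edge k = some e) :
    x.vert (k + 1) = G.s e := by
  simp [LPath.vert, h]

theorem mod_succ_cases (m N : ℕ) (hN : 0 < N) :
    ((m + 1) % N = m % N + 1 ∧ m % N + 1 < N) ∨
      ((m + 1) % N = 0 ∧ m % N + 1 = N) := by
  have hm : m % N < N := Nat.mod_lt _ hN
  have key : (m % N + 1) % N = (m + 1) % N := Nat.mod_add_mod m N 1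
  by_cases h : m % N + 1 < N
  · left
    exact ⟨by rw [← key, Nat.mod_eq_of_lt h], h⟩
  · right
    have he : m % N + 1 = N := by omega
    refine ⟨?_, he⟩
    rw [← key, he, Nat.mod_self]

theorem vert_shift (x : LPath G) (hx : x.Infinite) (a k : ℕ) :
    (x.shift a).vert k = x.vert (a + k) := by
  cases k with
  | zero => rfl
  | succ k =>
    obtain ⟨e, he⟩ := Option.isSome_iff_exists.mp (hx (a + k))
    have he' : (x.shift a).edge k = some e := he
    rw [vert_succ _ he']
    rw [show a + (k + 1) = (a + k) + 1 by omega, vert_succ _ he]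

theorem shift_zero (x : LPath G) : x.shift 0 = x := by
  refine lpext rfl (funext fun i => ?_)
  show x.edge (0 + i) = x.edge i
  rw [Nat.zero_add]

theorem shift_shift (x : LPath G) (hx : x.Infinite) (a b : ℕ) :
    (x.shift a).shift b = x.shift (a + b) := by
  refine lpext (vert_shift x hx a b) (funext fun i => ?_)
  show x.edge (a + (b + i)) = x.edge (a + b + i)
  rw [Nat.add_assoc]

theorem shift_infinite (x : LPath G) (hx : x.Infinite) (a : ℕ) :
    (x.shift a).Infinite := fun i => hx (a + i)

/-- Prepend a single edge to a path. -/
def cons (e : G.E) (x : LPath G) (h : G.s e = x.rng) : LPath G where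
  rng := G.r e
  edge k := match k with
    | 0 => some e
    | k + 1 => x.edge k
  edge_closed := by
    intro i hi
    cases i with
    | zero => simp at hi
    | succ k => exact x.edge_closed k hi
  rng_compat := by
    intro e' he'
    simp only [Option.some.injEq] at he'
    rw [← he']
  compat := by
    intro i a b ha hb
    cases i with
    | zero =>
      simp only [Option.some.injEq] at ha
      subst ha
      rw [h, x.rng_compat b hb]
    | succ k => exact x.compat k a b ha hb

theorem cons_edge_zero (e : G.E) (x : LPath G) (h : G.s e = x.rng) :
    (cons e x h).edge 0 = some e := rfl

theorem cons_edge_succ (e : G.E) (x : LPath G) (h : G.s e = x.rng) (k : ℕ) :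
    (cons e x h).edge (k + 1) = x.edge k := rfl

theorem cons_boundary (e : G.E) (x : LPath G) (h : G.s e = x.rng)
    (hb : x.Boundary) : (cons e x h).Boundary := by
  rcases hb with hinf | ⟨m, ⟨hnone, hle⟩, hsrc⟩
  · left
    intro i
    cases i with
    | zero => rfl
    | succ k => exact hinf k
  · right
    refine ⟨m + 1, ⟨hnone, ?_⟩, ?_⟩
    · intro i hi
      cases i with
      | zero => rfl
      | succ k => exact hle k (by omega)
    · have hv : (cons e x h).vert (m + 1) = x.vert m := by
        cases m with
        | zero =>
          rw [vert_succ _ (cons_edge_zero e x h)]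
          exact h
        | succ k =>
          obtain ⟨e', he'⟩ := Option.isSome_iff_exists.mp (hle k (by omega))
          have hc : (cons e x h).edge (k + 1) = some e' := he'
          rw [vert_succ _ hc, vert_succ _ he']
      rw [hv]
      exact hsrc

/-- Choose an edge into `v`, if one exists. -/
noncomputable def pick (G : DGraph) (v : G.V) : Option G.E :=
  if h : ∃ e : G.E, G.r e = v then some h.choose else none

theorem pick_some {v : G.V} {e : G.E} (h : pick G v = some e) : G.r e = v := by
  unfold pick at h
  split_ifs at h with hh
  · simp only [Option.some.injEq] at h
    rw [← h]
    exact hh.choose_spec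

theorem pick_none {v : G.V} (h : pick G v = none) : G.IsSource v := by
  intro e he
  unfold pick at h
  rw [dif_pos ⟨e, he⟩] at h
  exact absurd h (Option.some_ne_none _)

/-- The edges of a maximally extended path from `v`. -/
noncomputable def fedge (G : DGraph) (v : G.V) : ℕ → Option G.E
  | 0 => pick G v
  | n + 1 =>
    match fedge G v n with
    | some e => pick G (G.s e)
    | none => none

/-- A boundary path from `v`, given by following chosen edges maximally. -/
noncomputable def follow (G : DGraph) (v : G.V) : LPath G where
  rng := v
  edge := fedge G v
  edge_closed := by
    intro i hi
    show (match fedge G v i with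
      | some e => pick G (G.s e)
      | none => none) = none
    rw [hi]
  rng_compat := fun e he => pick_some he
  compat := by
    intro i a b ha hb
    have hb' : (match fedge G v i with
      | some e => pick G (G.s e)
      | none => none) = some b := hb
    rw [ha] at hb'
    exact (pick_some hb').symm

theorem follow_rng (G : DGraph) (v : G.V) : (follow G v).rng = v := rfl

theorem follow_boundary (G : DGraph) (v : G.V) : (follow G v).Boundary := by
  by_cases hinf : ∀ i, ((follow G v).edge i).isSome
  · exact Or.inl hinf
  · push_neg at hinf
    obtain ⟨i, hi⟩ := hinf
    have hex : ∃ n, fedge G v n = none := ⟨i, Option.not_isSome_iff_eq_none.mp hi⟩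
    right
    set n := Nat.find hex with hn
    have hnone : fedge G v n = none := Nat.find_spec hex
    have hmin : ∀ j, j < n → (fedge G v j).isSome := by
      intro j hj
      have := Nat.find_min hex hj
      exact Option.isSome_iff_ne_none.mpr this
    refine ⟨n, ⟨hnone, hmin⟩, ?_⟩
    cases hcn : n with
    | zero =>
      have h0 : fedge G v 0 = none := hcn ▸ hnone
      exact pick_none h0
    | succ m =>
      rw [hcn] at hnone hmin
      obtain ⟨e, he⟩ := Option.isSome_iff_exists.mp (hmin m (by omega))
      have he' : (follow G v).edge m = some e := he
      rw [vert_succ _ he']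
      have : (match fedge G v m with
        | some e => pick G (G.s e)
        | none => none) = none := hnone
      rw [he] at this
      exact pick_none this

end Helpers
section Helpers2

variable {G : DGraph}

theorem cyc_step (c : DCycle G) (m : ℕ) :
    G.s (c.edge (m % c.len)) = G.r (c.edge ((m + 1) % c.len)) := by
  rcases mod_succ_cases m c.len c.len_pos with ⟨h1, h2⟩ | ⟨h1, h2⟩
  · rw [h1]
    exact c.compat _ h2
  · rw [h1]
    have hm : m % c.len = c.len - 1 := by omega
    rw [hm]
    exact c.closed

/-- The periodic infinite path going around the cycle `c`. -/
def cyc (c : DCycle G) : LPath G where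
  rng := G.r (c.edge 0)
  edge n := some (c.edge (n % c.len))
  edge_closed := by intro i hi; simp at hi
  rng_compat := by
    intro e he
    simp only [Nat.zero_mod, Option.some.injEq] at he
    rw [← he]
  compat := by
    intro i a b ha hb
    simp only [Option.some.injEq] at ha hb
    rw [← ha, ← hb]
    exact cyc_step c i

theorem cyc_infinite (c : DCycle G) : (cyc c).Infinite := fun _ => rfl

theorem cyc_edge (c : DCycle G) (m : ℕ) :
    (cyc c).edge m = some (c.edge (m % c.len)) := rfl

theorem cyc_vert (c : DCycle G) (m : ℕ) :
    (cyc c).vert m = G.r (c.edge (m % c.len)) := by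
  induction m with
  | zero => simp [cyc, LPath.vert]
  | succ k _ =>
    rw [vert_succ _ (cyc_edge c k)]
    exact cyc_step c k

theorem rng_inj (c : DCycle G) {i j : ℕ} (hi : i < c.len) (hj : j < c.len)
    (h : G.r (c.edge i) = G.r (c.edge j)) : i = j := by
  have key : ∀ k, k < c.len →
      G.r (c.edge k) = G.s (c.edge (if k = 0 then c.len - 1 else k - 1)) := by
    intro k hk
    cases k with
    | zero => simp [c.closed]
    | succ m =>
      simp only [Nat.succ_ne_zero, if_false, Nat.add_sub_cancel]
      exact (c.compat m hk).symm
  rw [key i hi, key j hj] at h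
  have hlt : (if i = 0 then c.len - 1 else i - 1) < c.len := by
    split <;> omega
  have hlt' : (if j = 0 then c.len - 1 else j - 1) < c.len := by
    split <;> omega
  have := c.distinct _ _ hlt hlt' h
  have hp := c.len_pos
  split_ifs at this <;> omega

/-- Splice: follow `y` from position `n` for `d` steps, then continue as `x`. -/
def splice (y x : LPath G) (n d : ℕ) (hy : y.Infinite)
    (hc : y.vert (n + d) = x.rng) : LPath G where
  rng := y.vert n
  edge k := if k < d then y.edge (n + k) else x.edge (k - d)
  edge_closed := by
    intro k hk
    split at hk
    · exact absurd hk (Option.isSome_iff_ne_none.mp (hy (n + k)))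
    · rename_i hkd
      rw [if_neg (by omega)]
      rw [show k + 1 - d = (k - d) + 1 by omega]
      exact x.edge_closed _ hk
  rng_compat := by
    intro e he
    split at he
    · rw [← Nat.add_zero n] at he ⊢
      exact y.vert_eq _ _ he
    · rename_i hd
      have hd0 : d = 0 := by omega
      rw [hd0, Nat.sub_zero] at he
      rw [x.rng_compat e he, ← hc, hd0, Nat.add_zero]
  compat := by
    intro k a b ha hb
    by_cases h1 : k + 1 < d
    · rw [if_pos (by omega)] at ha
      rw [if_pos h1, show n + (k + 1) = (n + k) + 1 by omega] at hb
      exact y.compat _ a b ha hb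
    · by_cases h2 : k < d
      · have hkd : k + 1 = d := by omega
        rw [if_pos h2] at ha
        rw [if_neg h1, hkd, Nat.sub_self] at hb
        rw [← vert_succ y ha, x.rng_compat b hb, ← hc, ← hkd, Nat.add_assoc]
      · rw [if_neg h2] at ha
        rw [if_neg h1, show k + 1 - d = (k - d) + 1 by omega] at hb
        exact x.compat _ a b ha hb

theorem splice_vert_le (y x : LPath G) (n d : ℕ) (hy : y.Infinite)
    (hc : y.vert (n + d) = x.rng) {k : ℕ} (hk : k ≤ d) :
    (splice y x n d hy hc).vert k = y.vert (n + k) := by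
  induction k with
  | zero => rfl
  | succ m ih =>
    obtain ⟨e, he⟩ := Option.isSome_iff_exists.mp (hy (n + m))
    have he' : (splice y x n d hy hc).edge m = some e := by
      show (if m < d then y.edge (n + m) else x.edge (m - d)) = some e
      rw [if_pos (by omega)]
      exact he
    rw [vert_succ _ he', show n + (m + 1) = (n + m) + 1 by omega, vert_succ _ he]

theorem splice_shift (y x : LPath G) (n d : ℕ) (hy : y.Infinite)
    (hc : y.vert (n + d) = x.rng) :
    (splice y x n d hy hc).shift d = x := by
  refine lpext ?_ (funext fun i => ?_)
  · show (splice y x n d hy hc).vert d = x.rng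
    rw [splice_vert_le y x n d hy hc le_rfl, hc]
  · show (if d + i < d then y.edge (n + (d + i)) else x.edge (d + i - d)) = x.edge i
    rw [if_neg (by omega), Nat.add_sub_cancel_left]

theorem splice_lelen (y x : LPath G) (n d : ℕ) (hy : y.Infinite)
    (hc : y.vert (n + d) = x.rng) : (splice y x n d hy hc).LeLen d := by
  intro k hk
  show (if k < d then y.edge (n + k) else x.edge (k - d)).isSome
  rw [if_pos hk]
  exact hy (n + k)

theorem splice_boundary (y x : LPath G) (n d : ℕ) (hy : y.Infinite)
    (hc : y.vert (n + d) = x.rng) (hb : x.Boundary) :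
    (splice y x n d hy hc).Boundary := by
  rcases hb with hinf | ⟨m, ⟨hnone, hle⟩, hsrc⟩
  · left
    intro k
    show (if k < d then y.edge (n + k) else x.edge (k - d)).isSome
    split
    · exact hy (n + k)
    · exact hinf (k - d)
  · right
    refine ⟨d + m, ⟨?_, ?_⟩, ?_⟩
    · show (if d + m < d then y.edge (n + (d + m)) else x.edge (d + m - d)) = none
      rw [if_neg (by omega), Nat.add_sub_cancel_left]
      exact hnone
    · intro k hk
      show (if k < d then y.edge (n + k) else x.edge (k - d)).isSome
      split
      · exact hy (n + k)
      · exact hle (k - d) (by omega)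
    · have hv : (splice y x n d hy hc).vert (d + m) = x.vert m := by
        cases m with
        | zero =>
          rw [Nat.add_zero, splice_vert_le y x n d hy hc le_rfl, hc]
          rfl
        | succ k =>
          obtain ⟨e, he⟩ := Option.isSome_iff_exists.mp (hle k (by omega))
          have he' : (splice y x n d hy hc).edge (d + k) = some e := by
            show (if d + k < d then y.edge (n + (d + k)) else x.edge (d + k - d)) = some e
            rw [if_neg (by omega), Nat.add_sub_cancel_left]
            exact he
          rw [show d + (k + 1) = (d + k) + 1 by omega, vert_succ _ he', vert_succ _ he]
      rw [hv]
      exact hsrc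

/-- The periodic path repeating the first `N` edges of `x`. -/
def periodize (x : LPath G) (N : ℕ) (hN : 0 < N) (hx : x.Infinite)
    (hv : x.vert N = x.rng) : LPath G where
  rng := x.rng
  edge k := x.edge (k % N)
  edge_closed := by
    intro k hk
    exact absurd hk (Option.isSome_iff_ne_none.mp (hx _))
  rng_compat := by
    intro e he
    rw [Nat.zero_mod] at he
    exact x.rng_compat e he
  compat := by
    intro k a b ha hb
    rcases mod_succ_cases k N hN with ⟨h1, h2⟩ | ⟨h1, h2⟩
    · rw [h1] at hb
      exact x.compat _ a b ha hb
    · rw [h1] at hb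
      rw [← vert_succ x ha, h2, hv, x.rng_compat b hb]
  
theorem periodize_infinite (x : LPath G) (N : ℕ) (hN : 0 < N) (hx : x.Infinite)
    (hv : x.vert N = x.rng) : (periodize x N hN hx hv).Infinite := fun k => hx (k % N)

theorem periodize_vert (x : LPath G) (N : ℕ) (hN : 0 < N) (hx : x.Infinite)
    (hv : x.vert N = x.rng) (m : ℕ) :
    (periodize x N hN hx hv).vert m = x.vert (m % N) := by
  induction m with
  | zero => simp [periodize, LPath.vert]
  | succ k _ =>
    obtain ⟨e, he⟩ := Option.isSome_iff_exists.mp (hx (k % N))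
    have he' : (periodize x N hN hx hv).edge k = some e := he
    rw [vert_succ _ he']
    rcases mod_succ_cases k N hN with ⟨h1, h2⟩ | ⟨h1, h2⟩
    · rw [h1, vert_succ x he]
    · rw [h1]
      show G.s e = x.vert 0
      rw [← vert_succ x he, h2, hv]
      rfl

end Helpers2
/-- Let `E` be a directed graph such that for every `x ∈ E^{≤∞}`, every path in `E^∞`
that is frequently divertable to `[x]` is shift equivalent to `x`.  Then no cycle in
`E` has an entry. -/
theorem stmt13 (G : DGraph)
    (h : ∀ x : LPath G, x.Boundary → ∀ y : LPath G, y.Infinite →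
      LPath.FreqDiv y x → LPath.ShiftEquiv y x) :
    ∀ c : DCycle G, ¬ ∃ f : G.E, c.IsEntry f := by
  rintro c ⟨f, i, hi, hri, hfi⟩
  have hw : G.s f = (follow G (G.s f)).rng := rfl
  set x := cons f (follow G (G.s f)) hw with hxdef
  have hxB : x.Boundary := cons_boundary _ _ _ (follow_boundary G _)
  have hxr : x.rng = G.r f := rfl
  have hx0 : x.edge 0 = some f := rfl
  have peInf : (cyc c).Infinite := cyc_infinite c
  -- f is not an edge of the cycle
  have hfnc : ∀ j, j < c.len → c.edge j ≠ f := by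
    intro j hj hjf
    have hji : j = i := rng_inj c hj hi (by rw [hjf, ← hri])
    exact hfi (by rw [← hji, hjf])
  -- the periodic cycle path is frequently divertable to [x]
  have hfd1 : (cyc c).FreqDiv x := by
    intro n _
    have hmlt : n % c.len < c.len := Nat.mod_lt _ c.len_pos
    set d := i + (c.len - n % c.len) with hd
    have hmod : (n + d) % c.len = i := by
      have h2 := Nat.mod_add_div n c.len
      have h4 : c.len * (n / c.len + 1) = c.len * (n / c.len) + c.len := by ring
      have h3 : n + d = i + c.len * (n / c.len + 1) := by omega
      rw [h3, Nat.add_mul_mod_self_left, Nat.mod_eq_of_lt hi]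
    have hc1 : (cyc c).vert (n + d) = x.rng := by
      rw [cyc_vert, hmod, hxr, hri]
    refine ⟨splice (cyc c) x n d peInf hc1,
      splice_boundary _ _ _ _ _ _ hxB, rfl,
      ⟨(d : ℤ), d, 0, by push_cast; ring, splice_lelen _ _ _ _ _ _, ?_, ?_⟩⟩
    · intro k hk
      exact absurd hk (Nat.not_lt_zero k)
    · rw [splice_shift, shift_zero]
  obtain ⟨-, p, q, -, -, hxq, heq⟩ := h x hxB (cyc c) peInf hfd1
  -- x merges into the cycle after q steps
  have hedge : ∀ t, x.edge (q + t) = some (c.edge ((p + t) % c.len)) := by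
    intro t
    have h1 : (cyc c).edge (p + t) = x.edge (q + t) :=
      congrArg (fun z : LPath G => z.edge t) heq
    rw [← h1, cyc_edge]
  have hxInf : x.Infinite := by
    intro m
    rcases Nat.lt_or_ge m q with h' | h'
    · exact hxq m h'
    · rw [show m = q + (m - q) by omega, hedge]
      rfl
  -- a length N ≥ 1 with x.vert N = x.rng
  have hplt : p % c.len < c.len := Nat.mod_lt _ c.len_pos
  set t0 := i + (c.len - p % c.len) with ht0
  have hmod2 : (p + t0) % c.len = i := by
    have h2 := Nat.mod_add_div p c.len
    have h4 : c.len * (p / c.len + 1) = c.len * (p / c.len) + c.len := by ring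
    have h3 : p + t0 = i + c.len * (p / c.len + 1) := by omega
    rw [h3, Nat.add_mul_mod_self_left, Nat.mod_eq_of_lt hi]
  set N := q + t0 with hN'
  have hN : 0 < N := by omega
  have hvN : x.vert N = x.rng := by
    have h1 : (x.shift q).vert t0 = ((cyc c).shift p).vert t0 := by rw [heq]
    rw [vert_shift x hxInf, vert_shift (cyc c) peInf] at h1
    rw [hN', h1, cyc_vert, hmod2, hxr, hri]
  set zp := periodize x N hN hxInf hvN with hzp
  have zpInf : zp.Infinite := periodize_infinite x N hN hxInf hvN
  -- zp is frequently divertable to [x]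
  have hfd2 : zp.FreqDiv x := by
    intro m _
    refine ⟨x.shift (m % N), Or.inl (shift_infinite x hxInf _),
      (periodize_vert x N hN hxInf hvN m).symm,
      ⟨-(m % N : ℤ), 0, m % N, by push_cast; ring, ?_, fun k _ => hxInf k, shift_zero _⟩⟩
    intro k hk
    exact absurd hk (Nat.not_lt_zero k)
  obtain ⟨-, a, b, -, -, -, heq2⟩ := h x hxB zp zpInf hfd2
  -- derive the contradiction: zp contains f infinitely often, x does not
  set S := a + b + q with hS
  have hSle : S ≤ N * S := Nat.le_mul_of_pos_left S hN
  set k := N * S - a with hk'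
  have hak : a + k = N * S := by omega
  have hbk : q ≤ b + k := by omega
  have e1 : (zp.shift a).edge k = some f := by
    show x.edge ((a + k) % N) = some f
    rw [hak, Nat.mul_mod_right]
    exact hx0
  have e2 : (x.shift b).edge k = some (c.edge ((p + (b + k - q)) % c.len)) := by
    show x.edge (b + k) = _
    have h5 := hedge (b + k - q)
    rw [show q + (b + k - q) = b + k from by omega] at h5
    exact h5
  rw [heq2] at e1
  rw [e1] at e2
  exact hfnc _ (Nat.mod_lt _ c.len_pos) (Option.some.inj e2).symm
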